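/- Let n ≥ 1, α ∈ (0,1], ϰ > 0, and let f : ℝ^n → ℝ be differentiable with α-Hölder gradient: |∇f(x) - ∇f(y)| ≤ ϰ|x-y|^α for all x, y. Let x_0, x̃ ∈ ℝ^n, let e be a unit vector, let d ≥ 0, and set x = x̃ - d·e. Assume d ≤ |x - x_0|, |x̃ - x_0| ≤ 2|x - x_0|, and that -∇f(x_0)·e = |∇f(x_0)·e|. Then |∇f(x_0)·e| · d ≤ f(x) - f(x̃) + 3ϰ |x - x_0|^{1+α}. -/

import Mathlib

open scoped RealInnerProductSpace

/-- Euclidean form of the boundary lemma: if `f` is differentiable with `α`-Hölder gradient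
(constant `ϰ`), `e` is a unit vector, `x = xt - d e` with `d ≥ 0`, `d ≤ |x - x₀|`,
`|xt - x₀| ≤ 2|x - x₀|` and `-∇f(x₀)·e = |∇f(x₀)·e|`, then
`|∇f(x₀)·e| d ≤ f(x) - f(xt) + 3ϰ|x - x₀|^{1+α}`. -/
theorem boundary_normal_derivative_lemma (n : ℕ) (hn : 1 ≤ n) (α ϰ : ℝ)
    (hα₀ : 0 < α) (hα₁ : α ≤ 1) (hϰ : 0 < ϰ)
    (f : EuclideanSpace ℝ (Fin n) → ℝ) (hf : Differentiable ℝ f)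
    (hHolder : ∀ x y : EuclideanSpace ℝ (Fin n),
      ‖gradient f x - gradient f y‖ ≤ ϰ * ‖x - y‖ ^ α)
    (x₀ xt e : EuclideanSpace ℝ (Fin n)) (he : ‖e‖ = 1) (d : ℝ) (hd : 0 ≤ d)
    (x : EuclideanSpace ℝ (Fin n)) (hx : x = xt - d • e)
    (hdist : d ≤ ‖x - x₀‖) (htilde : ‖xt - x₀‖ ≤ 2 * ‖x - x₀‖)
    (hsign : -⟪gradient f x₀, e⟫ = |⟪gradient f x₀, e⟫|) :
    |⟪gradient f x₀, e⟫| * d ≤ f x - f xt + 3 * ϰ * ‖x - x₀‖ ^ (1 + α) := by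
  set R : ℝ := ‖x - x₀‖ with hR
  set A : ℝ := ⟪gradient f x₀, e⟫ with hA
  set B : ℝ := A + ϰ * (2 * R) ^ α with hB
  set g : ℝ → ℝ := fun t => f (x + t • e) with hg
  have hR0 : 0 ≤ R := norm_nonneg _
  -- derivative of g
  have hgderiv : ∀ t : ℝ, HasDerivAt g ⟪gradient f (x + t • e), e⟫ t := by
    intro t
    have hc : HasDerivAt (fun t : ℝ => x + t • e) e t := by
      simpa using ((hasDerivAt_id t).smul_const e).const_add x
    have := ((hf (x + t • e)).hasGradientAt.hasFDerivAt).comp_hasDerivAt t hc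
    rw [hg]; simpa [InnerProductSpace.toDual_apply_apply, Function.comp_def] using this
  -- the auxiliary function is antitone
  have hh : ∀ t : ℝ, HasDerivAt (fun t => g t - B * t) (⟪gradient f (x + t • e), e⟫ - B) t := by
    intro t
    have h2 : HasDerivAt (fun t : ℝ => B * t) B t := by
      simpa using (hasDerivAt_id t).const_mul B
    exact (hgderiv t).sub h2
  have hanti : AntitoneOn (fun t => g t - B * t) (Set.Icc 0 d) := by
    apply antitoneOn_of_deriv_nonpos (convex_Icc 0 d)
    · exact fun t _ => (hh t).continuousAt.continuousWithinAt
    · intro t ht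
      exact (hh t).differentiableAt.differentiableWithinAt
    · intro t ht
      rw [interior_Icc] at ht
      rw [(hh t).deriv]
      have hnorm : ‖x + t • e - x₀‖ ≤ 2 * R := by
        have h1 : ‖x + t • e - x₀‖ ≤ ‖x - x₀‖ + ‖t • e‖ := by
          have : x + t • e - x₀ = (x - x₀) + t • e := by abel
          rw [this]; exact norm_add_le _ _
        have h2 : ‖t • e‖ = t := by
          rw [norm_smul, he, mul_one, Real.norm_eq_abs, abs_of_nonneg ht.1.le]
        have : t ≤ R := le_trans ht.2.le hdist
        rw [h2] at h1; linarith
      have hinner : ⟪gradient f (x + t • e), e⟫ - A = ⟪gradient f (x + t • e) - gradient f x₀, e⟫ := by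
        rw [inner_sub_left]
      have hcs : ⟪gradient f (x + t • e) - gradient f x₀, e⟫ ≤ ‖gradient f (x + t • e) - gradient f x₀‖ := by
        have := real_inner_le_norm (gradient f (x + t • e) - gradient f x₀) e
        rwa [he, mul_one] at this
      have hhol := hHolder (x + t • e) x₀
      have hpow : ‖(x + t • e - x₀ : EuclideanSpace ℝ (Fin n))‖ ^ α ≤ (2 * R) ^ α :=
        Real.rpow_le_rpow (norm_nonneg _) hnorm hα₀.le
      have : ⟪gradient f (x + t • e), e⟫ - A ≤ ϰ * (2 * R) ^ α := by
        rw [hinner]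
        calc ⟪gradient f (x + t • e) - gradient f x₀, e⟫
            ≤ ‖gradient f (x + t • e) - gradient f x₀‖ := hcs
          _ ≤ ϰ * ‖(x + t • e - x₀ : EuclideanSpace ℝ (Fin n))‖ ^ α := hhol
          _ ≤ ϰ * (2 * R) ^ α := by
              exact mul_le_mul_of_nonneg_left hpow hϰ.le
      rw [hB]; linarith
  have hmem0 : (0 : ℝ) ∈ Set.Icc 0 d := ⟨le_refl 0, hd⟩
  have hmemd : d ∈ Set.Icc 0 d := ⟨hd, le_refl d⟩
  have hkey : g d - B * d ≤ g 0 - B * 0 := hanti hmem0 hmemd hd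
  have hg0 : g 0 = f x := by simp [hg]
  have hgd : g d = f xt := by
    have : x + d • e = xt := by rw [hx]; abel
    simp [hg, this]
  -- so f xt - f x ≤ B * d
  have hmain : f xt - f x ≤ B * d := by
    rw [hg0, hgd] at hkey; linarith
  -- bound the error term
  have h2a : (2 : ℝ) ^ α ≤ 2 := by
    calc (2 : ℝ) ^ α ≤ (2 : ℝ) ^ (1 : ℝ) :=
          Real.rpow_le_rpow_of_exponent_le one_le_two hα₁
      _ = 2 := Real.rpow_one 2
  have hsplit : (2 * R) ^ α = 2 ^ α * R ^ α := Real.mul_rpow (by norm_num) hR0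
  have hRsplit : R ^ (1 + α) = R * R ^ α := by
    rw [Real.rpow_add' hR0 (by positivity), Real.rpow_one]
  have hRα : 0 ≤ R ^ α := Real.rpow_nonneg hR0 α
  have herr : ϰ * (2 * R) ^ α * d ≤ 3 * ϰ * R ^ (1 + α) := by
    rw [hsplit, hRsplit]
    have s1 : ϰ * (2 ^ α * R ^ α) * d ≤ ϰ * (2 * R ^ α) * d :=
      mul_le_mul_of_nonneg_right
        (mul_le_mul_of_nonneg_left (mul_le_mul_of_nonneg_right h2a hRα) hϰ.le) hd
    have s2 : ϰ * (2 * R ^ α) * d ≤ ϰ * (2 * R ^ α) * R :=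
      mul_le_mul_of_nonneg_left hdist (by positivity)
    have s3 : 0 ≤ ϰ * (R * R ^ α) := by positivity
    nlinarith
  have habs : |A| = -A := hsign.symm
  rw [habs]
  rw [hB] at hmain
  nlinarith
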